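/- Let U be a normal ultrafilter on a measurable cardinal κ and let S ⊆ κ⁺⁺ be indexed by a family ⟨A_α : α ∈ S⟩ of sets in U, with a fixed finite stem s. Suppose the set U_s = S is stationary in κ⁺⁺. Then by Rowbottom's partition theorem there is a set Â ∈ U such that for every finite x ⊆ Â with min(x) > max(s), the set T_{s∪x} = {α ∈ S : x ⊆ A_α} is stationary in κ⁺⁺. -/

import Mathlib

/-- `C` is a club (closed unbounded set) in the ordinal `α`. -/
def IsClubIn (C : Set Ordinal) (α : Ordinal) : Prop :=
  C ⊆ Set.Iio α ∧ (∀ β < α, ∃ γ ∈ C, β < γ) ∧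
    ∀ β < α, 0 < β → (∀ γ < β, ∃ δ ∈ C, γ < δ ∧ δ < β) → β ∈ C

/-- U is a normal (κ-complete, diagonal-intersection-closed) ultrafilter on κ,
viewed as a family of subsets of the ordinals below κ.ord. -/
structure IsNormalUF (κ : Cardinal) (U : Set (Set Ordinal)) : Prop where
  sub : ∀ A ∈ U, A ⊆ Set.Iio κ.ord
  top : Set.Iio κ.ord ∈ U
  up : ∀ A ∈ U, ∀ B : Set Ordinal, B ⊆ Set.Iio κ.ord → A ⊆ B → B ∈ U
  inter : ∀ A ∈ U, ∀ B ∈ U, A ∩ B ∈ U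
  ultra : ∀ A : Set Ordinal, A ⊆ Set.Iio κ.ord → A ∈ U ∨ (Set.Iio κ.ord \ A) ∈ U
  complete : ∀ {ι : Type} (f : ι → Set Ordinal), Cardinal.mk ι < κ →
    (∀ i, f i ∈ U) → (Set.Iio κ.ord ∩ ⋂ i, f i) ∈ U
  normal : ∀ f : Ordinal → Set Ordinal, (∀ β < κ.ord, f β ∈ U) →
    {γ | γ < κ.ord ∧ ∀ β < γ, γ ∈ f β} ∈ U

section RBS

variable {κ : Cardinal.{0}} {U : Set (Set Ordinal.{0})}

open scoped Cardinal in
private lemma rbs_mu_aleph0 (hκ : ℵ₀ ≤ κ) : ℵ₀ ≤ Order.succ (Order.succ κ) :=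
  hκ.trans (((Order.lt_succ κ).trans (Order.lt_succ _)).le)

open scoped Cardinal in
private lemma rbs_club_Iio (μ : Cardinal.{0}) (hμ : ℵ₀ ≤ μ) :
    IsClubIn (Set.Iio μ.ord) μ.ord :=
  ⟨subset_rfl, fun β hβ => ⟨Order.succ β, (Cardinal.isSuccLimit_ord hμ).succ_lt hβ, Order.lt_succ β⟩,
    fun β hβ _ _ => hβ⟩

open scoped Cardinal in
/-- The intersection of κ many clubs in κ⁺⁺ is a club in κ⁺⁺. -/
private lemma rbs_club_inter (hκ : ℵ₀ ≤ κ)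
    (C : Ordinal → Set Ordinal)
    (hC : ∀ b < κ.ord, IsClubIn (C b) (Order.succ (Order.succ κ)).ord) :
    IsClubIn (Set.Iio (Order.succ (Order.succ κ)).ord ∩ {γ | ∀ b < κ.ord, γ ∈ C b})
      (Order.succ (Order.succ κ)).ord := by
  set μ := Order.succ (Order.succ κ) with hμdef
  have hμ : ℵ₀ ≤ μ := rbs_mu_aleph0 hκ
  have hlim : Order.IsSuccLimit μ.ord := Cardinal.isSuccLimit_ord hμ
  have hreg : μ.IsRegular := Cardinal.isRegular_succ (hκ.trans (Order.lt_succ κ).le)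
  have hcof : (μ.ord).cof = μ := hreg.cof_eq
  refine ⟨Set.inter_subset_left, ?_, ?_⟩
  · -- unboundedness
    intro β hβ
    have key : ∀ γ, γ < μ.ord → ∃ γ', γ < γ' ∧ γ' < μ.ord ∧
        ∀ b < κ.ord, ∃ δ ∈ C b, γ < δ ∧ δ ≤ γ' := by
      intro γ hγ
      have hch : ∀ b, ∃ δ, b < κ.ord → (δ ∈ C b ∧ γ < δ) := by
        intro b
        by_cases hb : b < κ.ord
        · obtain ⟨δ, hδ1, hδ2⟩ := (hC b hb).2.1 γ hγ
          exact ⟨δ, fun _ => ⟨hδ1, hδ2⟩⟩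
        · exact ⟨0, fun h => absurd h hb⟩
      choose g hg using hch
      refine ⟨max (Order.succ γ) (Ordinal.bsup κ.ord (fun b _ => g b)), ?_, ?_, ?_⟩
      · exact lt_max_iff.2 (Or.inl (Order.lt_succ γ))
      · refine max_lt (hlim.succ_lt hγ) (Ordinal.bsup_lt_ord ?_ ?_)
        · rw [hcof, Cardinal.card_ord]
          exact (Order.lt_succ κ).trans (Order.lt_succ _)
        · intro b hb
          exact (hC b hb).1 ((hg b hb).1)
      · intro b hb
        exact ⟨g b, (hg b hb).1, (hg b hb).2,
          le_max_iff.2 (Or.inr (Ordinal.le_bsup _ b hb))⟩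
    choose step hstep1 hstep2 hstep3 using key
    let F : ℕ → {x : Ordinal // x < μ.ord} := fun n =>
      Nat.rec ⟨β, hβ⟩ (fun _ p => ⟨step p.1 p.2, hstep2 p.1 p.2⟩) n
    have hFmono : ∀ n : ℕ, (F n).1 < (F (n + 1)).1 := fun n => hstep1 _ _
    have hγslt : (⨆ n : ℕ, (F n).1) < μ.ord := by
      refine Ordinal.iSup_lt_of_lt_cof ?_ (fun n => (F n).2)
      rw [hcof]
      exact lt_of_le_of_lt (le_of_eq (Cardinal.mk_eq_aleph0 ℕ))
        (hκ.trans_lt ((Order.lt_succ κ).trans (Order.lt_succ _)))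
    set γs := (⨆ n : ℕ, (F n).1) with hγsdef
    have hle : ∀ n, (F n).1 ≤ γs := fun n => Ordinal.le_iSup _ n
    have hβγs : β < γs := lt_of_lt_of_le (hFmono 0) (hle 1)
    have hγspos : 0 < γs := lt_of_le_of_lt zero_le hβγs
    refine ⟨γs, ⟨hγslt, ?_⟩, hβγs⟩
    intro b hb
    refine (hC b hb).2.2 γs hγslt hγspos ?_
    intro δ hδ
    obtain ⟨n, hn⟩ := Ordinal.lt_iSup_iff.1 hδ
    obtain ⟨ε, hεC, hγε, hεle⟩ := hstep3 (F n).1 (F n).2 b hb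
    refine ⟨ε, hεC, lt_trans hn hγε, lt_of_le_of_lt hεle ?_⟩
    exact lt_of_lt_of_le (hFmono (n + 1)) (hle (n + 2))
  · -- closedness
    intro β hβ h0 hlp
    refine ⟨hβ, fun b hb => (hC b hb).2.2 β hβ h0 ?_⟩
    intro γ hγ
    obtain ⟨δ, hδmem, h1, h2⟩ := hlp γ hγ
    exact ⟨δ, hδmem.2 b hb, h1, h2⟩

/-- The complement of a singleton is in U (in the nonprincipal, proper case). -/
private lemma rbs_compl_singleton (hU : IsNormalUF κ U) (hsing : ∀ c, {c} ∉ U)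
    (c : Ordinal) : Set.Iio κ.ord \ {c} ∈ U := by
  by_cases hc : c < κ.ord
  · rcases hU.ultra {c} (by simpa using hc) with h | h
    · exact absurd h (hsing c)
    · exact h
  · have : Set.Iio κ.ord \ {c} = Set.Iio κ.ord := by
      apply Set.diff_singleton_eq_self
      simpa using hc
    rw [this]; exact hU.top

/-- Removing finitely many points from a set in U keeps it in U. -/
private lemma rbs_diff_finset (hU : IsNormalUF κ U) (hsing : ∀ c, {c} ∉ U)
    (A : Set Ordinal) (hA : A ∈ U) (F : Finset Ordinal) : A \ ↑F ∈ U := by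
  classical
  induction F using Finset.induction with
  | empty => simpa using hA
  | @insert c F hc ih =>
    have h1 : (A \ ↑F) ∩ (Set.Iio κ.ord \ {c}) ∈ U :=
      hU.inter _ ih _ (rbs_compl_singleton hU hsing c)
    refine hU.up _ h1 _ (fun γ hγ => hU.sub A hA hγ.1) ?_
    rintro γ ⟨⟨hγA, hγF⟩, ⟨-, hγc⟩⟩
    refine ⟨hγA, ?_⟩
    simp only [Finset.coe_insert, Set.mem_insert_iff, Set.mem_singleton_iff] at *
    tauto

/-- Every set in U contains a finite subset of any size. -/
private lemma rbs_finset_in (hU : IsNormalUF κ U) (hempty : ∅ ∉ U) (hsing : ∀ c, {c} ∉ U)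
    (A : Set Ordinal) (hA : A ∈ U) (n : ℕ) :
    ∃ y : Finset Ordinal, ↑y ⊆ A ∧ y.card = n := by
  classical
  induction n with
  | zero => exact ⟨∅, by simp⟩
  | succ n ih =>
    obtain ⟨y, hy1, hy2⟩ := ih
    have hAy : A \ ↑y ∈ U := rbs_diff_finset hU hsing A hA y
    have hne : (A \ ↑y).Nonempty := by
      by_contra h
      rw [Set.not_nonempty_iff_eq_empty] at h
      rw [h] at hAy
      exact hempty hAy
    obtain ⟨b, hbA, hby⟩ := hne
    refine ⟨insert b y, ?_, ?_⟩
    · rw [Finset.coe_insert]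
      exact Set.insert_subset hbA hy1
    · rw [Finset.card_insert_of_notMem (fun h => hby (Finset.mem_coe.2 h)), hy2]

open scoped Cardinal in
/-- The tail above ω is in U (in the nonprincipal, proper case). -/
private lemma rbs_omega_tail (hκ : ℵ₀ ≤ κ) (hU : IsNormalUF κ U) (hsing : ∀ c, {c} ∉ U) :
    Set.Iio κ.ord \ Set.Iio Ordinal.omega0 ∈ U := by
  have hωκ : Ordinal.omega0 ≤ κ.ord := by
    rw [← Cardinal.ord_aleph0]
    exact Cardinal.ord_le_ord.2 hκ
  rcases hU.ultra (Set.Iio Ordinal.omega0) (fun γ hγ => lt_of_lt_of_le hγ hωκ) with h | h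
  · exfalso
    have hΔ := hU.normal (fun β => Set.Iio κ.ord \ {Order.succ β})
      (fun β _ => rbs_compl_singleton hU hsing (Order.succ β))
    have hint := hU.inter _ hΔ _ h
    have hsub : {γ | γ < κ.ord ∧ ∀ β < γ, γ ∈ Set.Iio κ.ord \ {Order.succ β}} ∩
        Set.Iio Ordinal.omega0 ⊆ {(0 : Ordinal)} := by
      rintro γ ⟨⟨hγκ, hγ⟩, hγω⟩
      obtain ⟨n, rfl⟩ := Ordinal.lt_omega0.1 hγω
      cases n with
      | zero => simp
      | succ m =>
        exfalso
        have hm : ((m : ℕ) : Ordinal) < ((m + 1 : ℕ) : Ordinal) := by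
          exact_mod_cast Nat.lt_succ_self m
        refine (hγ _ hm).2 ?_
        simp only [Set.mem_singleton_iff, Nat.cast_succ, Ordinal.add_one_eq_succ]
    have h0 : {(0 : Ordinal)} ∈ U := by
      refine hU.up _ hint _ ?_ hsub
      intro γ hγ
      simp only [Set.mem_singleton_iff] at hγ
      subst hγ
      exact lt_of_lt_of_le Ordinal.omega0_pos hωκ
    exact hsing 0 h0
  · exact h

open scoped Cardinal in
/-- Countable intersections of sets in U are in U (nonprincipal proper case). -/
private lemma rbs_countable_inter (hκ : ℵ₀ ≤ κ) (hU : IsNormalUF κ U)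
    (hsing : ∀ c, {c} ∉ U) (f : ℕ → Set Ordinal) (hf : ∀ n, f n ∈ U) :
    (Set.Iio κ.ord ∩ ⋂ n, f n) ∈ U := by
  classical
  have hfin : ∀ m : ℕ, (Set.Iio κ.ord ∩ {γ | ∀ n : ℕ, n ≤ m → γ ∈ f n}) ∈ U := by
    intro m
    induction m with
    | zero =>
      have he : Set.Iio κ.ord ∩ {γ | ∀ n : ℕ, n ≤ 0 → γ ∈ f n} = Set.Iio κ.ord ∩ f 0 := by
        ext γ
        simp only [Set.mem_inter_iff, Set.mem_setOf_eq, Nat.le_zero]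
        constructor
        · rintro ⟨h1, h2⟩; exact ⟨h1, h2 0 rfl⟩
        · rintro ⟨h1, h2⟩; exact ⟨h1, fun n hn => hn ▸ h2⟩
      rw [he]; exact hU.inter _ hU.top _ (hf 0)
    | succ m ih =>
      have he : Set.Iio κ.ord ∩ {γ | ∀ n : ℕ, n ≤ m + 1 → γ ∈ f n} =
          (Set.Iio κ.ord ∩ {γ | ∀ n : ℕ, n ≤ m → γ ∈ f n}) ∩ f (m + 1) := by
        ext γ
        simp only [Set.mem_inter_iff, Set.mem_setOf_eq]
        constructor
        · rintro ⟨h1, h2⟩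
          exact ⟨⟨h1, fun n hn => h2 n (hn.trans (Nat.le_succ m))⟩, h2 (m + 1) le_rfl⟩
        · rintro ⟨⟨h1, h2⟩, h3⟩
          refine ⟨h1, fun n hn => ?_⟩
          rcases Nat.lt_succ_iff_lt_or_eq.1 (Nat.lt_succ_of_le hn) with hlt | heq
          · exact h2 n (Nat.lt_succ_iff.1 hlt)
          · subst heq; exact h3
      rw [he]; exact hU.inter _ ih _ (hf (m + 1))
  set g : Ordinal → Set Ordinal := fun β =>
    Set.Iio κ.ord ∩ {γ | ∀ n : ℕ, (n : Ordinal) ≤ β → β < Ordinal.omega0 → γ ∈ f n}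
    with hgdef
  have hg : ∀ β < κ.ord, g β ∈ U := by
    intro β _
    by_cases hβω : β < Ordinal.omega0
    · obtain ⟨m, rfl⟩ := Ordinal.lt_omega0.1 hβω
      refine hU.up _ (hfin m) _ Set.inter_subset_left ?_
      rintro γ ⟨h1, h2⟩
      refine ⟨h1, fun n hn _ => h2 n ?_⟩
      exact_mod_cast hn
    · have hgβ : g β = Set.Iio κ.ord := by
        ext γ
        simp only [hgdef, Set.mem_inter_iff, Set.mem_setOf_eq]
        exact ⟨fun h => h.1, fun h => ⟨h, fun n _ hc => absurd hc hβω⟩⟩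
      rw [hgβ]; exact hU.top
  have hΔ := hU.normal g hg
  have htail := rbs_omega_tail hκ hU hsing
  refine hU.up _ (hU.inter _ hΔ _ htail) _ Set.inter_subset_left ?_
  rintro γ ⟨⟨hγκ, hγg⟩, ⟨-, hγω⟩⟩
  refine ⟨hγκ, Set.mem_iInter.2 fun n => ?_⟩
  have hn : ((n : ℕ) : Ordinal) < γ :=
    lt_of_lt_of_le (Ordinal.nat_lt_omega0 n) (not_lt.1 hγω)
  exact (hγg _ hn).2 n le_rfl (Ordinal.nat_lt_omega0 n)

/-- Rowbottom's theorem: homogeneous sets for finite colorings exist. -/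
private lemma rbs_rowbottom (hU : IsNormalUF κ U) (hempty : ∅ ∉ U) (hsing : ∀ c, {c} ∉ U) :
    ∀ (n : ℕ) (c : Finset Ordinal → Prop), ∃ Ah ∈ U, ∀ x y : Finset Ordinal,
      ↑x ⊆ Ah → ↑y ⊆ Ah → x.card = n → y.card = n → (c x ↔ c y) := by
  classical
  intro n
  induction n with
  | zero =>
    intro c
    refine ⟨Set.Iio κ.ord, hU.top, fun x y _ _ hx hy => ?_⟩
    rw [Finset.card_eq_zero.1 hx, Finset.card_eq_zero.1 hy]
  | succ n ih =>
    intro c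
    choose Ab hAbU hAbHom using fun b : Ordinal => ih (fun z => c (insert b z))
    choose z hzsub hzcard using fun b : Ordinal =>
      rbs_finset_in hU hempty hsing (Ab b) (hAbU b) n
    set i : Ordinal → Prop := fun b => c (insert b (z b)) with hidef
    set Δ : Set Ordinal := {γ | γ < κ.ord ∧ ∀ β < γ, γ ∈ Ab β} with hΔdef
    have hΔU : Δ ∈ U := hU.normal Ab (fun β _ => hAbU β)
    have main : ∀ x : Finset Ordinal, (hne : x.Nonempty) → ↑x ⊆ Δ → x.card = n + 1 →
        (c x ↔ i (x.min' hne)) := by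
      intro x hne hx hcard
      set b := x.min' hne with hbdef
      have hbx : b ∈ x := x.min'_mem hne
      set y := x.erase b with hydef
      have hycard : y.card = n := by
        rw [hydef, Finset.card_erase_of_mem hbx, hcard]
        omega
      have hysub : ↑y ⊆ Ab b := by
        intro e he
        have he' : e ∈ y := he
        have hex : e ∈ x := Finset.mem_of_mem_erase he'
        have hne' : e ≠ b := Finset.ne_of_mem_erase he'
        have hbe : b < e := lt_of_le_of_ne (x.min'_le e hex) (Ne.symm hne')
        exact (hx hex).2 b hbe
      have hh := hAbHom b y (z b) hysub (hzsub b) hycard (hzcard b)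
      rwa [Finset.insert_erase hbx] at hh
    rcases hU.ultra {b | b < κ.ord ∧ i b} (fun b hb => hb.1) with h | h
    · refine ⟨{b | b < κ.ord ∧ i b} ∩ Δ, hU.inter _ h _ hΔU, ?_⟩
      intro x y hx hy hxcard hycard
      have hxne : x.Nonempty := Finset.card_pos.1 (by rw [hxcard]; exact Nat.succ_pos n)
      have hyne : y.Nonempty := Finset.card_pos.1 (by rw [hycard]; exact Nat.succ_pos n)
      have hcx := main x hxne (hx.trans Set.inter_subset_right) hxcard
      have hcy := main y hyne (hy.trans Set.inter_subset_right) hycard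
      have hix : i (x.min' hxne) := (hx (x.min'_mem hxne)).1.2
      have hiy : i (y.min' hyne) := (hy (y.min'_mem hyne)).1.2
      exact iff_of_true (hcx.2 hix) (hcy.2 hiy)
    · refine ⟨(Set.Iio κ.ord \ {b | b < κ.ord ∧ i b}) ∩ Δ, hU.inter _ h _ hΔU, ?_⟩
      intro x y hx hy hxcard hycard
      have hxne : x.Nonempty := Finset.card_pos.1 (by rw [hxcard]; exact Nat.succ_pos n)
      have hyne : y.Nonempty := Finset.card_pos.1 (by rw [hycard]; exact Nat.succ_pos n)
      have hcx := main x hxne (hx.trans Set.inter_subset_right) hxcard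
      have hcy := main y hyne (hy.trans Set.inter_subset_right) hycard
      have hix : ¬ i (x.min' hxne) := by
        have hmem := (hx (x.min'_mem hxne)).1
        exact fun hi => hmem.2 ⟨hmem.1, hi⟩
      have hiy : ¬ i (y.min' hyne) := by
        have hmem := (hy (y.min'_mem hyne)).1
        exact fun hi => hmem.2 ⟨hmem.1, hi⟩
      exact iff_of_false (fun hc => hix (hcx.1 hc)) (fun hc => hiy (hcy.1 hc))

open scoped Cardinal in
/-- Lemma A: if T is stationary and each α ∈ T carries a set A α ∈ U, then the set of
b such that {α ∈ T | b ∈ A α} is stationary is in U. -/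
private lemma rbs_lemA (hκ : ℵ₀ ≤ κ) (hU : IsNormalUF κ U) (hempty : ∅ ∉ U)
    (A : Ordinal → Set Ordinal) (T : Set Ordinal)
    (hTA : ∀ α ∈ T, A α ∈ U)
    (hTstat : ∀ C : Set Ordinal, IsClubIn C (Order.succ (Order.succ κ)).ord →
      (T ∩ C).Nonempty) :
    {b | b < κ.ord ∧ ∀ C : Set Ordinal, IsClubIn C (Order.succ (Order.succ κ)).ord →
      ({α ∈ T | b ∈ A α} ∩ C).Nonempty} ∈ U := by
  classical
  set μ := Order.succ (Order.succ κ) with hμdef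
  have hμ : ℵ₀ ≤ μ := rbs_mu_aleph0 hκ
  set Bset : Set Ordinal := {b | b < κ.ord ∧ ∀ C : Set Ordinal, IsClubIn C μ.ord →
      ({α ∈ T | b ∈ A α} ∩ C).Nonempty} with hBdef
  by_contra hmem
  have hD : Set.Iio κ.ord \ Bset ∈ U :=
    (hU.ultra Bset (fun b hb => hb.1)).resolve_left hmem
  have hCb : ∀ b : Ordinal, ∃ Cb : Set Ordinal, IsClubIn Cb μ.ord ∧
      (b ∈ Set.Iio κ.ord \ Bset → {α ∈ T | b ∈ A α} ∩ Cb = ∅) := by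
    intro b
    by_cases hb : b ∈ Set.Iio κ.ord \ Bset
    · have hnot : ¬ ∀ C : Set Ordinal, IsClubIn C μ.ord →
          ({α ∈ T | b ∈ A α} ∩ C).Nonempty := fun hc => hb.2 ⟨hb.1, hc⟩
      push_neg at hnot
      obtain ⟨C0, hC0, hC0'⟩ := hnot
      exact ⟨C0, hC0, fun _ => hC0'⟩
    · exact ⟨Set.Iio μ.ord, rbs_club_Iio μ hμ, fun h => absurd h hb⟩
  choose Cb hCbclub hCbdisj using hCb
  have hclub := rbs_club_inter hκ Cb (fun b _ => hCbclub b)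
  obtain ⟨α, hαT, hαC⟩ := hTstat _ hclub
  have hAαD : A α ∩ (Set.Iio κ.ord \ Bset) ∈ U := hU.inter _ (hTA α hαT) _ hD
  have hne : (A α ∩ (Set.Iio κ.ord \ Bset)).Nonempty := by
    by_contra h
    rw [Set.not_nonempty_iff_eq_empty] at h
    rw [h] at hAαD
    exact hempty hAαD
  obtain ⟨b, hbA, hbD⟩ := hne
  have hαCb : α ∈ Cb b := hαC.2 b hbD.1
  have hmem' : α ∈ {α ∈ T | b ∈ A α} ∩ Cb b := ⟨⟨hαT, hbA⟩, hαCb⟩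
  rw [hCbdisj b hbD] at hmem'
  exact hmem'

end RBS

/-- Rowbottom-style homogeneity for stationarity: given a normal ultrafilter U on a
measurable κ, a stationary set S ⊆ κ⁺⁺ indexed by sets A_α ∈ U and a fixed stem s,
there is Â ∈ U such that for every finite x ⊆ Â lying above s, the set
T_{s∪x} = {α ∈ S : x ⊆ A_α} is stationary in κ⁺⁺. -/
theorem rowbottom_stationary (κ : Cardinal) (hκ : ℵ₀ ≤ κ)
    (U : Set (Set Ordinal)) (hU : IsNormalUF κ U)
    (S : Set Ordinal)
    (hSsub : S ⊆ Set.Iio (Order.succ (Order.succ κ)).ord)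
    (hSstat : ∀ C : Set Ordinal,
      IsClubIn C (Order.succ (Order.succ κ)).ord → (S ∩ C).Nonempty)
    (A : Ordinal → Set Ordinal) (hA : ∀ α ∈ S, A α ∈ U)
    (s : Finset Ordinal) (hs : ↑s ⊆ Set.Iio κ.ord) :
    ∃ Ah ∈ U, ∀ x : Finset Ordinal, ↑x ⊆ Ah →
      (∀ a ∈ s, ∀ b ∈ x, a < b) →
      ∀ C : Set Ordinal, IsClubIn C (Order.succ (Order.succ κ)).ord →
        ({α ∈ S | ↑x ⊆ A α} ∩ C).Nonempty := by
  classical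
  -- dispose of the degenerate case where κ is finite: there are no clubs in κ⁺⁺ then
  by_cases hκinf : Cardinal.aleph0 ≤ κ
  swap
  · refine ⟨Set.Iio κ.ord, hU.top, fun x hx _ C hC => ?_⟩
    exfalso
    obtain ⟨n, rfl⟩ := Cardinal.lt_aleph0.1 (not_le.1 hκinf)
    have hord : (Order.succ (Order.succ ((n : ℕ) : Cardinal))).ord =
        (((n + 2 : ℕ) : Cardinal)).ord := by
      rw [← Cardinal.nat_succ, ← Cardinal.nat_succ]
    rw [hord, Cardinal.ord_nat] at hC
    obtain ⟨γ, hγC, hγgt⟩ := hC.2.1 ((n + 1 : ℕ) : Ordinal) (by exact_mod_cast Nat.lt_succ_self (n+1))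
    have hγlt : γ < ((n + 2 : ℕ) : Ordinal) := hC.1 hγC
    have : γ ≤ ((n + 1 : ℕ) : Ordinal) := by
      have h2 : ((n + 2 : ℕ) : Ordinal) = Order.succ ((n + 1 : ℕ) : Ordinal) := by
        rw [← Ordinal.add_one_eq_succ]
        exact_mod_cast rfl
      rw [h2, Order.lt_succ_iff] at hγlt
      exact hγlt
    exact absurd hγgt (not_lt.2 this)
  by_cases hempty : ∅ ∈ U
  · refine ⟨∅, hempty, fun x hx _ C hC => ?_⟩
    have hx0 : x = ∅ := Finset.coe_eq_empty.1 (Set.subset_empty_iff.1 hx)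
    subst hx0
    have hset : {α ∈ S | (↑(∅ : Finset Ordinal) : Set Ordinal) ⊆ A α} = S := by simp
    rw [hset]
    exact hSstat C hC
  by_cases hsing : ∃ cpt : Ordinal, {cpt} ∈ U
  · obtain ⟨cpt, hcpt⟩ := hsing
    have hmem : ∀ B ∈ U, cpt ∈ B := by
      intro B hB
      by_contra hc
      have hBc : B ∩ {cpt} ∈ U := hU.inter _ hB _ hcpt
      have hBce : B ∩ {cpt} = ∅ := by
        ext γ
        simp only [Set.mem_inter_iff, Set.mem_singleton_iff, Set.mem_empty_iff_false,
          iff_false, not_and]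
        rintro hγ rfl
        exact hc hγ
      rw [hBce] at hBc
      exact hempty hBc
    refine ⟨{cpt}, hcpt, fun x hx _ C hC => ?_⟩
    have hset : {α ∈ S | (↑x : Set Ordinal) ⊆ A α} = S := by
      ext α
      simp only [Set.mem_setOf_eq, and_iff_left_iff_imp]
      intro hα e he
      have he' : e = cpt := hx he
      subst he'
      exact hmem _ (hA α hα)
    rw [hset]
    exact hSstat C hC
  push_neg at hsing
  -- main case: U is a proper, nonprincipal normal ultrafilter
  set c : Finset Ordinal → Prop := fun x =>
    ∀ C : Set Ordinal, IsClubIn C (Order.succ (Order.succ κ)).ord →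
      ({α ∈ S | (↑x : Set Ordinal) ⊆ A α} ∩ C).Nonempty
    with hcdef
  choose Ah hAhU hAhHom using fun n : ℕ => rbs_rowbottom hU hempty hsing n c
  have hAinf : (Set.Iio κ.ord ∩ ⋂ n, Ah n) ∈ U :=
    rbs_countable_inter hκinf hU hsing Ah hAhU
  set Ainf := Set.Iio κ.ord ∩ ⋂ n, Ah n with hAinfdef
  have hAinfsub : ∀ n, Ainf ⊆ Ah n :=
    fun n => Set.inter_subset_right.trans (Set.iInter_subset _ n)
  have key : ∀ n : ℕ, ∀ x : Finset Ordinal, ↑x ⊆ Ainf → x.card = n → c x := by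
    intro n
    induction n with
    | zero =>
      intro x hx hcard C hC
      have hx0 : x = ∅ := Finset.card_eq_zero.1 hcard
      subst hx0
      have hset : {α ∈ S | (↑(∅ : Finset Ordinal) : Set Ordinal) ⊆ A α} = S := by simp
      rw [hset]
      exact hSstat C hC
    | succ n ih =>
      intro x hx hcard
      obtain ⟨y, hysub, hycard⟩ := rbs_finset_in hU hempty hsing Ainf hAinf n
      have hystat : c y := ih y hysub hycard
      have hTA : ∀ α ∈ {α ∈ S | (↑y : Set Ordinal) ⊆ A α}, A α ∈ U :=
        fun α hα => hA α hα.1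
      have hB := rbs_lemA hκinf hU hempty A {α ∈ S | (↑y : Set Ordinal) ⊆ A α} hTA hystat
      set Bset : Set Ordinal := {b | b < κ.ord ∧
          ∀ C : Set Ordinal, IsClubIn C (Order.succ (Order.succ κ)).ord →
          ({α' ∈ {α ∈ S | (↑y : Set Ordinal) ⊆ A α} | b ∈ A α'} ∩ C).Nonempty} with hBsetdef
      have hpick : ((Ainf ∩ Bset) \ ↑y) ∈ U :=
        rbs_diff_finset hU hsing _ (hU.inter _ hAinf _ hB) y
      have hne : ((Ainf ∩ Bset) \ ↑y).Nonempty := by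
        by_contra h
        rw [Set.not_nonempty_iff_eq_empty] at h
        rw [h] at hpick
        exact hempty hpick
      obtain ⟨b, ⟨hbAinf, hbB⟩, hby⟩ := hne
      have hx' : ↑(insert b y) ⊆ Ainf := by
        rw [Finset.coe_insert]
        exact Set.insert_subset hbAinf hysub
      have hstat' : c (insert b y) := by
        intro C hC
        have hset : {α ∈ S | (↑(insert b y) : Set Ordinal) ⊆ A α} =
            {α' ∈ {α ∈ S | (↑y : Set Ordinal) ⊆ A α} | b ∈ A α'} := by
          ext α
          simp only [Set.mem_setOf_eq, Finset.coe_insert, Set.insert_subset_iff]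
          tauto
        rw [hset]
        exact hbB.2 C hC
      have hcard' : (insert b y).card = n + 1 := by
        rw [Finset.card_insert_of_notMem (fun h => hby (Finset.mem_coe.2 h)), hycard]
      exact (hAhHom (n + 1) x (insert b y) (hx.trans (hAinfsub (n + 1)))
        (hx'.trans (hAinfsub (n + 1))) hcard hcard').2 hstat'
  exact ⟨Ainf, hAinf, fun x hx _ C hC => key x.card x hx rfl C hC⟩
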